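/- Let 𝔏 denote the set of Liouville numbers, i.e. 𝔏 = ⋂_{τ>2} {x ∈ ℝ : |x − p/q| < q^{−τ} for infinitely many pairs (p,q) ∈ ℤ × ℕ}. Then dim_H(𝔏 × 𝔏) ≥ 1, where 𝔏 × 𝔏 is viewed as a subset of ℝ². -/

import Mathlib

open MeasureTheory
open scoped ENNReal
open Filter Finset Nat

/-- The set of Liouville numbers, defined as
`⋂_{τ>2} {x ∈ ℝ : |x − p/q| < q^{−τ} for infinitely many (p,q) ∈ ℤ × ℕ}`. -/
noncomputable def LiouvilleSet : Set ℝ :=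
  ⋂ τ ∈ Set.Ioi (2:ℝ),
    {x : ℝ | {pq : ℤ × ℕ | 0 < pq.2 ∧
      |x - (pq.1 : ℝ) / (pq.2 : ℝ)| < (pq.2 : ℝ) ^ (-τ)}.Infinite}

namespace Stmt12


/-- `n`-th dyadic-factorial truncation of `x`. -/
noncomputable def s (x : ℝ) (n : ℕ) : ℝ := ⌊x * 2 ^ (n !)⌋ / 2 ^ (n !)

/-- Increment between consecutive truncations. -/
noncomputable def inc (x : ℝ) (n : ℕ) : ℝ := s x (n + 1) - s x n

lemma s_le (x : ℝ) (n : ℕ) : s x n ≤ x := by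
  rw [s, div_le_iff₀ (by positivity)]
  exact Int.floor_le _

lemma lt_s_add (x : ℝ) (n : ℕ) : x < s x n + ((2 : ℝ) ^ (n !))⁻¹ := by
  rw [s, show ((2:ℝ) ^ (n !))⁻¹ = 1 / 2 ^ (n !) by rw [one_div], ← add_div,
    lt_div_iff₀ (by positivity)]
  linarith [Int.lt_floor_add_one (x * 2 ^ (n !))]

lemma floor_mul_le (x : ℝ) (k d : ℕ) :
    (⌊x * 2 ^ k⌋ * 2 ^ d : ℤ) ≤ ⌊x * 2 ^ (k + d)⌋ := by
  rw [Int.le_floor]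
  push_cast
  calc (⌊x * 2 ^ k⌋ : ℝ) * 2 ^ d ≤ (x * 2 ^ k) * 2 ^ d := by
        have := Int.floor_le (x * 2 ^ k)
        gcongr
    _ = x * 2 ^ (k + d) := by rw [pow_add]; ring

lemma s_mono (x : ℝ) : Monotone (s x) := by
  apply monotone_nat_of_le_succ
  intro n
  have hk : n ! ≤ (n + 1)! := Nat.factorial_le (Nat.le_succ n)
  obtain ⟨d, hd⟩ := Nat.exists_eq_add_of_le hk
  rw [s, s, div_le_div_iff₀ (by positivity) (by positivity), hd]
  have h1 := floor_mul_le x (n !) d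
  calc (⌊x * 2 ^ (n !)⌋ : ℝ) * 2 ^ (n ! + d)
      = (↑(⌊x * 2 ^ (n !)⌋ * 2 ^ d)) * 2 ^ (n !) := by push_cast; rw [pow_add]; ring
    _ ≤ (⌊x * 2 ^ (n ! + d)⌋ : ℝ) * 2 ^ (n !) := by
        have : ((⌊x * 2 ^ (n !)⌋ * 2 ^ d : ℤ) : ℝ) ≤ (⌊x * 2 ^ (n ! + d)⌋ : ℝ) :=
          Int.cast_le.mpr h1
        gcongr

lemma inc_nonneg (x : ℝ) (n : ℕ) : 0 ≤ inc x n :=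
  sub_nonneg.mpr (s_mono x (Nat.le_succ n))

lemma inc_le (x : ℝ) (n : ℕ) : inc x n ≤ ((2 : ℝ) ^ (n !))⁻¹ := by
  have h1 : s x (n + 1) ≤ x := s_le x (n + 1)
  have h2 := lt_s_add x n
  rw [inc]
  linarith

lemma inc_le' (x : ℝ) (n : ℕ) : inc x n ≤ (1 / 2 : ℝ) ^ n := by
  refine (inc_le x n).trans ?_
  rw [one_div, ← inv_pow]
  apply pow_le_pow_of_le_one (by norm_num) (by norm_num) (Nat.self_le_factorial n)

lemma summable_inc (x : ℝ) : Summable (inc x) :=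
  Summable.of_nonneg_of_le (inc_nonneg x) (inc_le' x) summable_geometric_two

lemma summable_inc_comp (x : ℝ) (b : ℕ → ℕ) (hb : Function.Injective b) :
    Summable (fun k => inc x (b k)) :=
  (summable_inc x).comp_injective hb

lemma tendsto_s (x : ℝ) : Tendsto (s x) atTop (nhds x) := by
  have h0 : Tendsto (fun n : ℕ => x - (1 / 2 : ℝ) ^ n) atTop (nhds x) := by
    have : Tendsto (fun n : ℕ => (1 / 2 : ℝ) ^ n) atTop (nhds 0) := by
      apply tendsto_pow_atTop_nhds_zero_of_lt_one <;> norm_num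
    simpa using (tendsto_const_nhds (x := x)).sub this
  apply tendsto_of_tendsto_of_tendsto_of_le_of_le h0 tendsto_const_nhds
  · intro n
    have h2 := lt_s_add x n
    have h3 : ((2 : ℝ) ^ (n !))⁻¹ ≤ (1 / 2 : ℝ) ^ n := by
      rw [one_div, ← inv_pow]
      apply pow_le_pow_of_le_one (by norm_num) (by norm_num) (Nat.self_le_factorial n)
    linarith
  · exact fun n => s_le x n

lemma hasSum_tail (x : ℝ) (N : ℕ) :
    HasSum (fun j => inc x (j + N)) (x - s x N) := by
  rw [hasSum_iff_tendsto_nat_of_nonneg (fun j => inc_nonneg x _)]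
  have key : ∀ M : ℕ, ∑ j ∈ range M, inc x (j + N) = s x (N + M) - s x N := by
    intro M
    have h := Finset.sum_range_sub (fun j => s x (N + j)) M
    rw [show s x (N + M) - s x N = s x (N + M) - s x (N + 0) by norm_num, ← h]
    apply Finset.sum_congr rfl
    intro j _
    rw [inc, show j + N + 1 = N + (j + 1) by omega, show j + N = N + j by omega]
  simp only [key]
  have : Tendsto (fun M : ℕ => s x (N + M)) atTop (nhds x) :=
    (tendsto_s x).comp ((tendsto_add_atTop_nat N).congr (fun M => Nat.add_comm M N))
  exact this.sub tendsto_const_nhds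



lemma mem_liouvilleSet {w : ℝ} (p : ℕ → ℤ) (q : ℕ → ℕ)
    (hq : StrictMono q) (hq0 : ∀ m, 0 < q m)
    (h : ∀ τ : ℝ, 2 < τ → ∀ᶠ m in atTop, |w - (p m : ℝ) / (q m : ℝ)| < (q m : ℝ) ^ (-τ)) :
    w ∈ LiouvilleSet := by
  rw [LiouvilleSet, Set.mem_iInter₂]
  intro τ hτ
  rw [Set.mem_Ioi] at hτ
  obtain ⟨N, hN⟩ := eventually_atTop.mp (h τ hτ)
  apply Set.infinite_of_injective_forall_mem
    (f := fun m : ℕ => ((p (N + m), q (N + m)) : ℤ × ℕ))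
  · intro m m' hmm
    have : q (N + m) = q (N + m') := congrArg Prod.snd hmm
    have := hq.injective this
    omega
  · intro m
    exact ⟨hq0 _, hN (N + m) (Nat.le_add_right _ _)⟩



noncomputable def D (x : ℝ) (n : ℕ) : ℤ :=
  ⌊x * 2 ^ ((n + 1)!)⌋ - ⌊x * 2 ^ (n !)⌋ * 2 ^ ((n + 1)! - n !)

lemma helper_div (A Q : ℕ) (hAQ : A ≤ Q) (r : ℝ) :
    r * 2 ^ (Q - A) / 2 ^ Q = r / 2 ^ A := by
  rw [div_eq_div_iff (by positivity) (by positivity), mul_assoc, ← pow_add,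
    Nat.sub_add_cancel hAQ]

lemma inc_eq (x : ℝ) (n : ℕ) : inc x n = (D x n : ℝ) / 2 ^ ((n + 1)!) := by
  have hle : n ! ≤ (n + 1)! := Nat.factorial_le (Nat.le_succ n)
  rw [inc, s, s, D]
  push_cast
  rw [sub_div]
  congr 1
  rw [← helper_div (n !) ((n + 1)!) hle ((⌊x * 2 ^ (n !)⌋ : ℝ))]


lemma partial_eq (x : ℝ) (c : ℤ) (b : ℕ → ℕ) (hbM : Monotone b) (m : ℕ) :
    ((c * 2 ^ ((b m + 1)! - 1)
        + ∑ k ∈ range (m + 1), D x (b k) * 2 ^ ((b m + 1)! - (b k + 1)!) : ℤ) : ℝ)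
        / ((2 ^ ((b m + 1)!) : ℕ) : ℝ)
      = (c : ℝ) / 2 + ∑ k ∈ range (m + 1), inc x (b k) := by
  push_cast
  rw [_root_.add_div, Finset.sum_div]
  congr 1
  · have h1 : 1 ≤ (b m + 1)! := Nat.one_le_iff_ne_zero.mpr (Nat.factorial_ne_zero _)
    have := helper_div 1 ((b m + 1)!) h1 (c : ℝ)
    simpa using this
  · apply Finset.sum_congr rfl
    intro k hk
    rw [inc_eq]
    have hkm : b k + 1 ≤ b m + 1 := by
      have := hbM (Nat.lt_succ_iff.mp (Finset.mem_range.mp hk))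
      omega
    exact helper_div ((b k + 1)!) ((b m + 1)!) (Nat.factorial_le hkm) _

lemma tail_le (x : ℝ) (b : ℕ → ℕ) (hbS : StrictMono b) (m : ℕ) :
    ∑' k, inc x (b (k + (m + 1))) ≤ x - s x (b (m + 1)) := by
  rw [← (hasSum_tail x (b (m + 1))).tsum_eq]
  apply Summable.tsum_le_tsum_of_inj (fun k => b (k + (m + 1)) - b (m + 1))
  · intro k k' hkk
    simp only at hkk
    have h1 : b (m + 1) ≤ b (k + (m + 1)) := hbS.monotone (Nat.le_add_left _ _)
    have h2 : b (m + 1) ≤ b (k' + (m + 1)) := hbS.monotone (Nat.le_add_left _ _)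
    have : b (k + (m + 1)) = b (k' + (m + 1)) := by omega
    have := hbS.injective this
    omega
  · intro j _
    exact inc_nonneg x _
  · intro k
    have h1 : b (m + 1) ≤ b (k + (m + 1)) := hbS.monotone (Nat.le_add_left _ _)
    apply le_of_eq
    congr 1
    omega
  · exact summable_inc_comp x _ (fun k k' h => by
      have := hbS.injective h; omega)
  · exact summable_inc_comp x _ (fun j j' h => by omega)

lemma mem_of_part (x : ℝ) (c : ℤ) (b : ℕ → ℕ) (hb : ∀ m, b m + 2 ≤ b (m + 1)) :
    ((c : ℝ) / 2 + ∑' k, inc x (b k)) ∈ LiouvilleSet := by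
  have hbS : StrictMono b := strictMono_nat_of_lt_succ (fun n => by have := hb n; omega)
  have hbm : ∀ m, m ≤ b m := fun m => hbS.le_apply
  apply mem_liouvilleSet
    (fun m => c * 2 ^ ((b m + 1)! - 1)
        + ∑ k ∈ range (m + 1), D x (b k) * 2 ^ ((b m + 1)! - (b k + 1)!))
    (fun m => 2 ^ ((b m + 1)!))
  · intro m m' hmm
    have h1 : b m + 1 < b m' + 1 := by have := hbS hmm; omega
    have h2 : (b m + 1)! < (b m' + 1)! := (Nat.factorial_lt (by omega)).mpr h1
    exact Nat.pow_lt_pow_right (by norm_num) h2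
  · intro m
    positivity
  · intro τ hτ
    obtain ⟨M, hM⟩ := exists_nat_gt τ
    rw [eventually_atTop]
    refine ⟨M, fun m hm => ?_⟩
    have hsplit : (∑' k, inc x (b k))
        = ∑ k ∈ range (m + 1), inc x (b k) + ∑' k, inc x (b (k + (m + 1))) :=
      (Summable.sum_add_tsum_nat_add (m + 1) (summable_inc_comp x b hbS.injective)).symm
    rw [partial_eq x c b hbS.monotone m]
    have htail0 : 0 ≤ ∑' k, inc x (b (k + (m + 1))) :=
      tsum_nonneg (fun k => inc_nonneg x _)
    have habs : |(c : ℝ) / 2 + ∑' k, inc x (b k)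
        - ((c : ℝ) / 2 + ∑ k ∈ range (m + 1), inc x (b k))|
        = ∑' k, inc x (b (k + (m + 1))) := by
      rw [hsplit, abs_of_nonneg (by linarith)]; ring
    rw [habs]
    have h1 := tail_le x b hbS m
    have h2 : x - s x (b (m + 1)) < ((2 : ℝ) ^ ((b (m + 1))!))⁻¹ := by
      have := lt_s_add x (b (m + 1)); linarith
    have h3 : ((2 : ℝ) ^ ((b (m + 1))!))⁻¹
        ≤ ((2 ^ ((b m + 1)!) : ℕ) : ℝ) ^ (-τ) := by
      have hQ : ((b m + 2) * (b m + 1)!) ≤ (b (m + 1))! := by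
        calc (b m + 2) * (b m + 1)! = (b m + 2)! := (Nat.factorial_succ (b m + 1)).symm
          _ ≤ (b (m + 1))! := Nat.factorial_le (hb m)
      have e1 : ((2 ^ ((b m + 1)!) : ℕ) : ℝ) = (2 : ℝ) ^ (((b m + 1)! : ℕ) : ℝ) := by
        push_cast
        rw [Real.rpow_natCast]
      have e2 : ((2 : ℝ) ^ ((b (m + 1))!))⁻¹
          = (2 : ℝ) ^ (-(((b (m + 1))! : ℕ) : ℝ)) := by
        rw [Real.rpow_neg (by norm_num), Real.rpow_natCast]
      rw [e1, e2, ← Real.rpow_mul (by norm_num)]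
      apply Real.rpow_le_rpow_of_exponent_le one_le_two
      have hτM : τ ≤ ((b m + 2 : ℕ) : ℝ) := by
        have h5 : (M : ℝ) ≤ ((b m + 2 : ℕ) : ℝ) := by
          have : M ≤ b m + 2 := le_trans (le_trans hm (hbm m)) (by omega)
          exact_mod_cast this
        linarith
      have hQc : ((b m + 2 : ℕ) : ℝ) * (((b m + 1)! : ℕ) : ℝ) ≤ (((b (m + 1))! : ℕ) : ℝ) := by
        rw [← Nat.cast_mul]
        exact_mod_cast hQ
      have hfac0 : (0 : ℝ) ≤ (((b m + 1)! : ℕ) : ℝ) := Nat.cast_nonneg _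
      nlinarith
    exact (h1.trans_lt h2).trans_le h3

lemma exists_add (x : ℝ) : ∃ u ∈ LiouvilleSet, ∃ v ∈ LiouvilleSet, u + v = x := by
  refine ⟨(⌊x * 2 ^ ((0 : ℕ)!)⌋ : ℝ) / 2 + ∑' k, inc x (2 * k),
    mem_of_part x _ (fun k => 2 * k) (fun m => by omega),
    (((0 : ℤ) : ℝ) / 2 + ∑' k, inc x (2 * k + 1)),
    mem_of_part x 0 (fun k => 2 * k + 1) (fun m => by simp; omega), ?_⟩
  have hs0 : (⌊x * 2 ^ ((0 : ℕ)!)⌋ : ℝ) / 2 = s x 0 := by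
    rw [s]
    norm_num
  have he : Summable fun k => inc x (2 * k) :=
    summable_inc_comp x _ (fun k k' h => by omega)
  have ho : Summable fun k => inc x (2 * k + 1) :=
    summable_inc_comp x _ (fun k k' h => by omega)
  have hsum : (∑' k, inc x (2 * k)) + ∑' k, inc x (2 * k + 1) = ∑' n, inc x n :=
    tsum_even_add_odd he ho
  have htot : (∑' n, inc x n) = x - s x 0 := by
    have := (hasSum_tail x 0).tsum_eq
    simpa using this
  rw [hs0]
  push_cast
  linarith

end Stmt12

theorem stmt_12 : 1 ≤ dimH (LiouvilleSet ×ˢ LiouvilleSet) := by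
  have hlip : LipschitzWith 2 (fun p : ℝ × ℝ => p.1 + p.2) := by
    apply LipschitzWith.of_dist_le_mul
    intro p q
    rw [Prod.dist_eq, Real.dist_eq, Real.dist_eq, Real.dist_eq]
    have h1 : |p.1 + p.2 - (q.1 + q.2)| ≤ |p.1 - q.1| + |p.2 - q.2| := by
      calc |p.1 + p.2 - (q.1 + q.2)| = |(p.1 - q.1) + (p.2 - q.2)| := by ring_nf
        _ ≤ |p.1 - q.1| + |p.2 - q.2| := abs_add_le _ _
    have h2 : |p.1 - q.1| ≤ max |p.1 - q.1| |p.2 - q.2| := le_max_left _ _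
    have h3 : |p.2 - q.2| ≤ max |p.1 - q.1| |p.2 - q.2| := le_max_right _ _
    push_cast
    linarith
  have himg : (fun p : ℝ × ℝ => p.1 + p.2) '' (LiouvilleSet ×ˢ LiouvilleSet) = Set.univ := by
    apply Set.eq_univ_of_forall
    intro t
    obtain ⟨u, hu, v, hv, huv⟩ := Stmt12.exists_add t
    exact ⟨(u, v), Set.mk_mem_prod hu hv, huv⟩
  calc (1 : ℝ≥0∞) = dimH (Set.univ : Set ℝ) := Real.dimH_univ.symm
    _ = dimH ((fun p : ℝ × ℝ => p.1 + p.2) '' (LiouvilleSet ×ˢ LiouvilleSet)) := by rw [himg]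
    _ ≤ dimH (LiouvilleSet ×ˢ LiouvilleSet) := hlip.dimH_image_le _
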